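/- Let ε > 0, N ≥ 1 an integer, M > 0, α ∈ {1,…,N}, and let I ⊂ ℝ be an open interval. Let X, V, ξ₁,…,ξ_N, η₁,…,η_N : I → ℝ² be differentiable functions and E : I×ℝ² → ℝ² a map such that for all s ∈ I: X(s) ≠ ξ_β(s) for every β; |ξ_β(s) − ξ_γ(s)| ≥ M for all β ≠ γ; X′(s) = V(s)/ε; V′(s) = V(s)^⊥/ε² + (1/ε)( E(s,X(s)) + Σ_{β=1}^N (X(s)−ξ_β(s))/|X(s)−ξ_β(s)|² ); ξ_β′(s) = η_β(s)/ε for every β; and η_α′(s) = η_α(s)^⊥/ε² + E(s,ξ_α(s))/ε + (1/ε) Σ_{β≠α} (ξ_α(s)−ξ_β(s))/|ξ_α(s)−ξ_β(s)|². Then for every s ∈ I with |X(s)−ξ_α(s)| ≤ M/2, the function r(s) = |X(s)−ξ_α(s)| is twice differentiable at s and 1/|X(s)−ξ_α(s)| ≤ ε² r″(s) + ε^{-1} |V(s)−η_α(s)| + |E(s,X(s))| + |E(s,ξ_α(s))| + 3N/M. -/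

import Mathlib

open MeasureTheory Real Filter
open scoped ENNReal Topology RealInnerProductSpace

noncomputable abbrev E2 := EuclideanSpace ℝ (Fin 2)

/-- Rotation by `π/2`: `(a₁, a₂)ᵖ = (-a₂, a₁)`. -/
noncomputable def perp (a : E2) : E2 :=
  (WithLp.equiv 2 (Fin 2 → ℝ)).symm ![-a 1, a 0]

lemma perp_sub (a b : E2) : perp a - perp b = perp (a - b) := by
  ext i
  fin_cases i <;> (simp [perp, WithLp.equiv_symm_apply, PiLp.toLp_apply]; try ring)

lemma norm_perp (a : E2) : ‖perp a‖ = ‖a‖ := by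
  rw [EuclideanSpace.norm_eq, EuclideanSpace.norm_eq]
  congr 1
  simp only [Fin.sum_univ_two, perp, WithLp.equiv_symm_apply, PiLp.toLp_apply, WithLp.ofLp_toLp,
    Matrix.cons_val_zero, Matrix.cons_val_one, Matrix.head_cons,
    Real.norm_eq_abs, sq_abs]
  ring

lemma hasDerivAt_norm_aux {Z : ℝ → E2} {w : E2} {s : ℝ}
    (hZ : HasDerivAt Z w s) (h0 : Z s ≠ 0) :
    HasDerivAt (fun u => ‖Z u‖) (⟪Z s, w⟫ / ‖Z s‖) s := by
  have hin : HasDerivAt (fun u => ⟪Z u, Z u⟫) (⟪Z s, w⟫ + ⟪w, Z s⟫) s :=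
    hZ.inner ℝ hZ
  have hn : ‖Z s‖ ≠ 0 := norm_ne_zero_iff.2 h0
  have hpos : (0:ℝ) < ⟪Z s, Z s⟫ := by
    rw [real_inner_self_eq_norm_sq]
    positivity
  have hsq := (Real.hasDerivAt_sqrt hpos.ne').comp s hin
  have heq : (fun u => Real.sqrt ⟪Z u, Z u⟫) = fun u => ‖Z u‖ := by
    funext u
    rw [real_inner_self_eq_norm_sq, Real.sqrt_sq (norm_nonneg _)]
  simp only [Function.comp_def] at hsq
  rw [heq] at hsq
  refine hsq.congr_deriv ?_
  rw [real_inner_self_eq_norm_sq, Real.sqrt_sq (norm_nonneg _),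
    real_inner_comm w (Z s)]
  field_simp
  ring

lemma arith_aux (e r a b c pA QA : ℝ) (hr : 0 < r)
    (h1 : e ^ 2 * a = 1 + pA) (hCS : c * c ≤ r ^ 2 * b) (hpA : |pA| ≤ r * QA) :
    r⁻¹ ≤ e ^ 2 * (((a + b) * r - c * (c / r)) / r ^ 2) + QA := by
  have hrne : r ≠ 0 := hr.ne'
  have e1 : e ^ 2 * (((a + b) * r - c * (c / r)) / r ^ 2)
      = (e ^ 2 * a) / r + e ^ 2 * (b * r ^ 2 - c * c) / r ^ 3 := by
    field_simp
    ring
  have hb : 0 ≤ b * r ^ 2 - c * c := by nlinarith [hCS]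
  have e2 : 0 ≤ e ^ 2 * (b * r ^ 2 - c * c) / r ^ 3 :=
    div_nonneg (mul_nonneg (sq_nonneg e) hb) (by positivity)
  have hp : -(r * QA) ≤ pA := by
    have := neg_abs_le pA
    linarith
  have h5 : 1 / r ≤ (e ^ 2 * a) / r + QA := by
    rw [h1, add_div]
    have hpr : -QA ≤ pA / r := by
      rw [le_div_iff₀ hr]
      nlinarith
    linarith
  rw [e1, ← one_div]
  linarith

theorem stmt6 (ε : ℝ) (hε : 0 < ε) (N : ℕ) (hN : 1 ≤ N) (M : ℝ) (hM : 0 < M)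
    (α : Fin N) (I : Set ℝ) (hIopen : IsOpen I) (hIconn : I.OrdConnected)
    (X V : ℝ → E2) (ξ η : Fin N → ℝ → E2) (E : ℝ → E2 → E2)
    (hne : ∀ s ∈ I, ∀ β, X s ≠ ξ β s)
    (hsep : ∀ s ∈ I, ∀ β γ, β ≠ γ → M ≤ ‖ξ β s - ξ γ s‖)
    (hX : ∀ s ∈ I, HasDerivAt X (ε⁻¹ • V s) s)
    (hV : ∀ s ∈ I, HasDerivAt V ((ε ^ 2)⁻¹ • perp (V s) +
        ε⁻¹ • (E s (X s) + ∑ β, (‖X s - ξ β s‖ ^ 2)⁻¹ • (X s - ξ β s))) s)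
    (hξ : ∀ β, ∀ s ∈ I, HasDerivAt (ξ β) (ε⁻¹ • η β s) s)
    (hη : ∀ s ∈ I, HasDerivAt (η α) ((ε ^ 2)⁻¹ • perp (η α s) + ε⁻¹ • E s (ξ α s) +
        ε⁻¹ • ∑ β ∈ Finset.univ.erase α, (‖ξ α s - ξ β s‖ ^ 2)⁻¹ • (ξ α s - ξ β s)) s) :
    ∀ s ∈ I, ‖X s - ξ α s‖ ≤ M / 2 →
      DifferentiableAt ℝ (fun u => ‖X u - ξ α u‖) s ∧
      DifferentiableAt ℝ (deriv fun u => ‖X u - ξ α u‖) s ∧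
      (‖X s - ξ α s‖)⁻¹
        ≤ ε ^ 2 * deriv (deriv fun u => ‖X u - ξ α u‖) s
          + ε⁻¹ * ‖V s - η α s‖ + ‖E s (X s)‖ + ‖E s (ξ α s)‖ + 3 * N / M := by
  intro s hs hclose
  -- basic notation
  set W : ℝ → E2 := fun u => ε⁻¹ • (V u - η α u) with hWdef
  have hZ0 : ∀ u ∈ I, X u - ξ α u ≠ 0 := fun u hu => sub_ne_zero.2 (hne u hu α)
  have hZd : ∀ u ∈ I, HasDerivAt (fun t => X t - ξ α t) (W u) u := by
    intro u hu
    have := (hX u hu).sub (hξ α u hu)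
    show HasDerivAt _ (ε⁻¹ • (V u - η α u)) u
    rw [smul_sub]
    exact this
  have hr : ∀ u ∈ I, HasDerivAt (fun t => ‖X t - ξ α t‖)
      (⟪X u - ξ α u, W u⟫ / ‖X u - ξ α u‖) u :=
    fun u hu => hasDerivAt_norm_aux (hZd u hu) (hZ0 u hu)
  have hdiff1 : DifferentiableAt ℝ (fun u => ‖X u - ξ α u‖) s :=
    (hr s hs).differentiableAt
  -- the first-derivative function near s
  set g : ℝ → ℝ := fun u => ⟪X u - ξ α u, W u⟫ / ‖X u - ξ α u‖ with hgdef
  have hev : (deriv fun u => ‖X u - ξ α u‖) =ᶠ[𝓝 s] g := by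
    filter_upwards [hIopen.mem_nhds hs] with u hu
    exact (hr u hu).deriv
  -- second derivative of Z
  set W' : E2 := ε⁻¹ • (((ε ^ 2)⁻¹ • perp (V s) +
        ε⁻¹ • (E s (X s) + ∑ β, (‖X s - ξ β s‖ ^ 2)⁻¹ • (X s - ξ β s))) -
      ((ε ^ 2)⁻¹ • perp (η α s) + ε⁻¹ • E s (ξ α s) +
        ε⁻¹ • ∑ β ∈ Finset.univ.erase α, (‖ξ α s - ξ β s‖ ^ 2)⁻¹ • (ξ α s - ξ β s)))
    with hW'def
  have hWd : HasDerivAt W W' s := ((hV s hs).sub (hη s hs)).const_smul ε⁻¹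
  -- abbreviations at s
  set Zs : E2 := X s - ξ α s with hZsdef
  have hrpos : (0:ℝ) < ‖Zs‖ := norm_pos_iff.2 (hZ0 s hs)
  have hrne : ‖Zs‖ ≠ 0 := hrpos.ne'
  -- g has a derivative at s
  have hnum : HasDerivAt (fun u => ⟪X u - ξ α u, W u⟫)
      (⟪Zs, W'⟫ + ⟪W s, W s⟫) s := (hZd s hs).inner ℝ hWd
  have hg : HasDerivAt g
      (((⟪Zs, W'⟫ + ⟪W s, W s⟫) * ‖Zs‖ - ⟪Zs, W s⟫ * (⟪Zs, W s⟫ / ‖Zs‖)) / ‖Zs‖ ^ 2) s :=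
    hnum.div (hr s hs) hrne
  have hdiff2 : DifferentiableAt ℝ (deriv fun u => ‖X u - ξ α u‖) s :=
    (hg.differentiableAt).congr_of_eventuallyEq hev
  refine ⟨hdiff1, hdiff2, ?_⟩
  have hd2 : deriv (deriv fun u => ‖X u - ξ α u‖) s
      = ((⟪Zs, W'⟫ + ⟪W s, W s⟫) * ‖Zs‖ - ⟪Zs, W s⟫ * (⟪Zs, W s⟫ / ‖Zs‖)) / ‖Zs‖ ^ 2 := by
    rw [hev.deriv_eq, hg.deriv]
  rw [hd2]
  -- decomposition of the force term
  set A : E2 := ε⁻¹ • perp (V s - η α s) + (E s (X s) - E s (ξ α s)) +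
      ∑ β ∈ Finset.univ.erase α,
        ((‖X s - ξ β s‖ ^ 2)⁻¹ • (X s - ξ β s) -
          (‖ξ α s - ξ β s‖ ^ 2)⁻¹ • (ξ α s - ξ β s)) with hAdef
  have hsum : (∑ β, (‖X s - ξ β s‖ ^ 2)⁻¹ • (X s - ξ β s)) =
      (‖Zs‖ ^ 2)⁻¹ • Zs +
        ∑ β ∈ Finset.univ.erase α, (‖X s - ξ β s‖ ^ 2)⁻¹ • (X s - ξ β s) := by
    rw [hZsdef]
    exact (Finset.add_sum_erase _ _ (Finset.mem_univ α)).symm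
  have hkey : (ε ^ 2) • W' = (‖Zs‖ ^ 2)⁻¹ • Zs + A := by
    rw [hAdef, hW'def, ← perp_sub, hsum, Finset.sum_sub_distrib]
    match_scalars <;> (field_simp; try ring)
  have hinner : (ε ^ 2) * ⟪Zs, W'⟫ = 1 + ⟪Zs, A⟫ := by
    have h1 : ⟪Zs, (ε ^ 2) • W'⟫ = (ε ^ 2) * ⟪Zs, W'⟫ := real_inner_smul_right _ _ _
    rw [← h1, hkey, inner_add_right, real_inner_smul_right,
      real_inner_self_eq_norm_sq]
    have : (‖Zs‖ ^ 2)⁻¹ * ‖Zs‖ ^ 2 = 1 := by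
      field_simp
    rw [this]
  have hCS : ⟪Zs, W s⟫ * ⟪Zs, W s⟫ ≤ ‖Zs‖ ^ 2 * ⟪W s, W s⟫ := by
    have h := real_inner_mul_inner_self_le Zs (W s)
    rwa [real_inner_self_eq_norm_sq] at h
  have hZA : |⟪Zs, A⟫| ≤ ‖Zs‖ * ‖A‖ := abs_real_inner_le_norm _ _
  -- norm bound on A
  have hAbound : ‖A‖ ≤ ε⁻¹ * ‖V s - η α s‖ + ‖E s (X s)‖ + ‖E s (ξ α s)‖
      + 3 * N / M := by
    have hterm : ∀ β ∈ Finset.univ.erase α,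
        ‖(‖X s - ξ β s‖ ^ 2)⁻¹ • (X s - ξ β s) -
          (‖ξ α s - ξ β s‖ ^ 2)⁻¹ • (ξ α s - ξ β s)‖ ≤ 3 / M := by
      intro β hβ
      have hβα : β ≠ α := Finset.ne_of_mem_erase hβ
      have hsep' : M ≤ ‖ξ α s - ξ β s‖ := hsep s hs α β (Ne.symm hβα)
      have hXβ : M / 2 ≤ ‖X s - ξ β s‖ := by
        have tri : ‖ξ α s - ξ β s‖ ≤ ‖ξ α s - X s‖ + ‖X s - ξ β s‖ := by
          have := dist_triangle (ξ α s) (X s) (ξ β s)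
          simpa [dist_eq_norm] using this
        have hrev : ‖ξ α s - X s‖ = ‖Zs‖ := by
          rw [hZsdef, norm_sub_rev]
        rw [hrev] at tri
        linarith
      have hXβpos : (0:ℝ) < ‖X s - ξ β s‖ := lt_of_lt_of_le (by linarith) hXβ
      have hξβpos : (0:ℝ) < ‖ξ α s - ξ β s‖ := lt_of_lt_of_le hM hsep'
      have h1 : ‖(‖X s - ξ β s‖ ^ 2)⁻¹ • (X s - ξ β s)‖ = ‖X s - ξ β s‖⁻¹ := by
        rw [norm_smul, Real.norm_eq_abs, abs_of_nonneg (by positivity)]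
        field_simp
      have h2 : ‖(‖ξ α s - ξ β s‖ ^ 2)⁻¹ • (ξ α s - ξ β s)‖ = ‖ξ α s - ξ β s‖⁻¹ := by
        rw [norm_smul, Real.norm_eq_abs, abs_of_nonneg (by positivity)]
        field_simp
      have b1 : ‖X s - ξ β s‖⁻¹ ≤ 2 / M := by
        rw [div_eq_mul_inv, show (2:ℝ) * M⁻¹ = (M/2)⁻¹ by rw [inv_div]; ring]
        exact inv_anti₀ (by linarith) hXβ
      have b2 : ‖ξ α s - ξ β s‖⁻¹ ≤ 1 / M := by
        rw [one_div]
        exact inv_anti₀ hM hsep'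
      calc ‖(‖X s - ξ β s‖ ^ 2)⁻¹ • (X s - ξ β s) -
          (‖ξ α s - ξ β s‖ ^ 2)⁻¹ • (ξ α s - ξ β s)‖
          ≤ ‖(‖X s - ξ β s‖ ^ 2)⁻¹ • (X s - ξ β s)‖ +
            ‖(‖ξ α s - ξ β s‖ ^ 2)⁻¹ • (ξ α s - ξ β s)‖ := norm_sub_le _ _
        _ = ‖X s - ξ β s‖⁻¹ + ‖ξ α s - ξ β s‖⁻¹ := by rw [h1, h2]
        _ ≤ 2 / M + 1 / M := add_le_add b1 b2
        _ = 3 / M := by ring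
    have hsumbound : ‖∑ β ∈ Finset.univ.erase α,
        ((‖X s - ξ β s‖ ^ 2)⁻¹ • (X s - ξ β s) -
          (‖ξ α s - ξ β s‖ ^ 2)⁻¹ • (ξ α s - ξ β s))‖ ≤ 3 * N / M := by
      calc ‖∑ β ∈ Finset.univ.erase α, _‖
          ≤ ∑ β ∈ Finset.univ.erase α, (3 / M) := by
            refine (norm_sum_le _ _).trans (Finset.sum_le_sum hterm)
        _ = ((Finset.univ.erase α).card : ℝ) * (3 / M) := by
            rw [Finset.sum_const, nsmul_eq_mul]
        _ ≤ (N : ℝ) * (3 / M) := by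
            have hcard : (Finset.univ.erase α).card ≤ N := by
              calc (Finset.univ.erase α).card ≤ Finset.univ.card :=
                    Finset.card_erase_le.trans (le_refl _)
                _ = N := by simp
            have : ((Finset.univ.erase α).card : ℝ) ≤ (N : ℝ) := by
              exact_mod_cast hcard
            have h3M : (0:ℝ) ≤ 3 / M := by positivity
            exact mul_le_mul_of_nonneg_right this h3M
        _ = 3 * N / M := by ring
    have hp1 : ‖ε⁻¹ • perp (V s - η α s)‖ = ε⁻¹ * ‖V s - η α s‖ := by
      rw [norm_smul, Real.norm_eq_abs, abs_of_pos (inv_pos.2 hε), norm_perp]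
    calc ‖A‖ ≤ ‖ε⁻¹ • perp (V s - η α s) + (E s (X s) - E s (ξ α s))‖ +
          ‖∑ β ∈ Finset.univ.erase α,
            ((‖X s - ξ β s‖ ^ 2)⁻¹ • (X s - ξ β s) -
              (‖ξ α s - ξ β s‖ ^ 2)⁻¹ • (ξ α s - ξ β s))‖ := by
            rw [hAdef]; exact norm_add_le _ _
      _ ≤ ‖ε⁻¹ • perp (V s - η α s)‖ + ‖E s (X s) - E s (ξ α s)‖ +
          (3 * N / M) := by
            have := norm_add_le (ε⁻¹ • perp (V s - η α s)) (E s (X s) - E s (ξ α s))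
            linarith [hsumbound]
      _ ≤ ε⁻¹ * ‖V s - η α s‖ + (‖E s (X s)‖ + ‖E s (ξ α s)‖) + 3 * N / M := by
            rw [hp1]
            have := norm_sub_le (E s (X s)) (E s (ξ α s))
            linarith
      _ = ε⁻¹ * ‖V s - η α s‖ + ‖E s (X s)‖ + ‖E s (ξ α s)‖ + 3 * N / M := by ring
  -- final arithmetic
  have hfin := arith_aux ε ‖Zs‖ ⟪Zs, W'⟫ ⟪W s, W s⟫ ⟪Zs, W s⟫ ⟪Zs, A⟫ ‖A‖
    hrpos hinner hCS hZA
  linarith [hfin, hAbound]
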